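/- For every p ∈ (0,∞) and all n₁, n₂ ∈ ℕ, the contraction coefficients of a finitely generated self-similar group satisfy η_{p, n₁+n₂} ≤ η_{p,n₁} · η_{p,n₂}, an inequality of values in [0,∞]. (Lemma 4.1 of the paper.) -/

import Mathlib

open Filter Topology
open scoped ENNReal NNReal

/-- A self-similar group: a group `G` acting on the set of finite words `List X`
by length-preserving bijections, together with a section (restriction) map. -/
structure SelfSimilarGroup (X : Type*) (G : Type*) [Group G] where
  act : G → List X → List X
  sec : G → List X → G
  length_act : ∀ g v, (act g v).length = v.length
  act_append : ∀ g v w, act g (v ++ w) = act g v ++ act (sec g v) w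
  sec_append : ∀ g v w, sec g (v ++ w) = sec (sec g v) w
  act_one : ∀ v, act 1 v = v
  sec_one : ∀ v, sec 1 v = 1
  act_mul : ∀ g h v, act (g * h) v = act g (act h v)
  sec_mul : ∀ g h v, sec (g * h) v = sec g (act h v) * sec h v

/-- Word length with respect to a finite generating set `S`. -/
noncomputable def wordLength {G : Type*} [Group G] (S : Finset G) (g : G) : ℕ :=
  sInf {n | ∃ w : List G, (∀ s ∈ w, s ∈ S) ∧ w.length = n ∧ w.prod = g}

section WL
variable {G : Type*} [Group G] (S : Finset G)

lemma wordLength_exists (hgen : Subgroup.closure (S : Set G) = ⊤)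
    (hsym : ∀ s ∈ S, s⁻¹ ∈ S) (g : G) :
    ∃ w : List G, (∀ s ∈ w, s ∈ S) ∧ w.length = wordLength S g ∧ w.prod = g := by
  have hmem : g ∈ (Subgroup.closure (S : Set G)).toSubmonoid := by
    rw [hgen]; trivial
  rw [Subgroup.closure_toSubmonoid] at hmem
  obtain ⟨l, hl, hprod⟩ := Submonoid.exists_list_of_mem_closure hmem
  have hne : {n | ∃ w : List G, (∀ s ∈ w, s ∈ S) ∧ w.length = n ∧ w.prod = g}.Nonempty := by
    refine ⟨l.length, l, fun s hs => ?_, rfl, hprod⟩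
    rcases hl s hs with h | h
    · exact h
    · simpa using hsym s⁻¹ (by simpa using h)
  exact Nat.sInf_mem hne

lemma wordLength_one : wordLength S (1 : G) = 0 :=
  Nat.sInf_eq_zero.mpr (Or.inl ⟨[], by simp⟩)

lemma wordLength_mul_le (hgen : Subgroup.closure (S : Set G) = ⊤)
    (hsym : ∀ s ∈ S, s⁻¹ ∈ S) (g h : G) :
    wordLength S (g * h) ≤ wordLength S g + wordLength S h := by
  obtain ⟨w₁, hw₁, hlen₁, hp₁⟩ := wordLength_exists S hgen hsym g
  obtain ⟨w₂, hw₂, hlen₂, hp₂⟩ := wordLength_exists S hgen hsym h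
  refine Nat.sInf_le ⟨w₁ ++ w₂, fun s hs => ?_, by simp [hlen₁, hlen₂], by simp [hp₁, hp₂]⟩
  rcases List.mem_append.mp hs with h' | h'
  · exact hw₁ s h'
  · exact hw₂ s h'

end WL

section SB
variable {X G : Type*} [Fintype X] [Group G]

noncomputable def secBound (A : SelfSimilarGroup X G) (S : Finset G) (n : ℕ) : ℕ :=
  (S ×ˢ (Finset.univ : Finset (Fin n → X))).sup
    fun q => wordLength S (A.sec q.1 (List.ofFn q.2))

lemma secBound_le (A : SelfSimilarGroup X G) (S : Finset G) {n : ℕ} {s : G}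
    (hs : s ∈ S) (v : List X) (hv : v.length = n) :
    wordLength S (A.sec s v) ≤ secBound A S n := by
  subst hv
  have h := Finset.le_sup (b := (s, v.get)) (f := fun q : G × (Fin v.length → X) =>
    wordLength S (A.sec q.1 (List.ofFn q.2)))
    (Finset.mem_product.mpr ⟨hs, Finset.mem_univ _⟩)
  simpa [secBound, List.ofFn_get] using h

lemma sec_wordLength_le (A : SelfSimilarGroup X G) (S : Finset G)
    (hgen : Subgroup.closure (S : Set G) = ⊤) (hsym : ∀ s ∈ S, s⁻¹ ∈ S)
    {n : ℕ} (g : G) (v : List X) (hv : v.length = n) :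
    wordLength S (A.sec g v) ≤ secBound A S n * wordLength S g := by
  obtain ⟨w, hw, hlen, rfl⟩ := wordLength_exists S hgen hsym g
  rw [← hlen]
  clear hlen
  induction w generalizing v with
  | nil => simp [A.sec_one, wordLength_one]
  | cons s w ih =>
    rw [List.prod_cons, A.sec_mul]
    calc wordLength S (A.sec s (A.act w.prod v) * A.sec w.prod v)
        ≤ wordLength S (A.sec s (A.act w.prod v)) + wordLength S (A.sec w.prod v) :=
          wordLength_mul_le S hgen hsym _ _
      _ ≤ secBound A S n + secBound A S n * w.length := by
          refine add_le_add ?_ (ih v hv (fun s hs => hw s (List.mem_cons_of_mem _ hs)))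
          exact secBound_le A S (hw s List.mem_cons_self) _ (by rw [A.length_act, hv])
      _ = secBound A S n * (s :: w).length := by
          rw [List.length_cons]; ring
end SB

lemma ennreal_limsup_add_le {α : Type*} (f : Filter α) (u v : α → ℝ≥0∞) :
    Filter.limsup (fun x => u x + v x) f ≤ Filter.limsup u f + Filter.limsup v f := by
  refine ENNReal.le_of_forall_pos_le_add fun ε hε hfin => ?_
  have hu : Filter.limsup u f ≠ ∞ := ne_top_of_le_ne_top hfin.ne le_self_add
  have hv : Filter.limsup v f ≠ ∞ := ne_top_of_le_ne_top hfin.ne le_add_self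
  have hε2 : ((ε : ℝ≥0∞) / 2) ≠ 0 :=
    (ENNReal.div_pos (by exact_mod_cast hε.ne') (by norm_num)).ne'
  have h1 : ∀ᶠ x in f, u x < Filter.limsup u f + (ε : ℝ≥0∞) / 2 :=
    Filter.eventually_lt_of_limsup_lt (ENNReal.lt_add_right hu hε2)
  have h2 : ∀ᶠ x in f, v x < Filter.limsup v f + (ε : ℝ≥0∞) / 2 :=
    Filter.eventually_lt_of_limsup_lt (ENNReal.lt_add_right hv hε2)
  refine Filter.limsup_le_of_le (by isBoundedDefault) ?_
  filter_upwards [h1, h2] with x hx1 hx2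
  calc u x + v x ≤ (Filter.limsup u f + (ε : ℝ≥0∞) / 2) +
        (Filter.limsup v f + (ε : ℝ≥0∞) / 2) := add_le_add hx1.le hx2.le
    _ = Filter.limsup u f + Filter.limsup v f + (ε : ℝ≥0∞) := by
        rw [add_add_add_comm, ENNReal.add_halves]

/-- The contraction coefficient `η_{p,n} ∈ [0,∞]`: the limsup of
`(Σ_{v ∈ X^n} l(g|_v)^p)^{1/p} / l(g)` as `l(g) → ∞` (along the filter generated by
the sets `{g : l(g) ≥ m}`).  Words of length `n` are encoded as functions `Fin n → X`. -/
noncomputable def eta {X G : Type*} [Fintype X] [Group G]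
    (A : SelfSimilarGroup X G) (S : Finset G) (p : ℝ) (n : ℕ) : ℝ≥0∞ :=
  Filter.limsup
    (fun g : G =>
      (∑ f : Fin n → X, (wordLength S (A.sec g (List.ofFn f)) : ℝ≥0∞) ^ p) ^ (1 / p)
        / (wordLength S g : ℝ≥0∞))
    (Filter.comap (wordLength S) Filter.atTop)

/-- `N` is the nucleus of a contracting self-similar group: a finite subset containing `1`,
closed under sections, absorbing all sections of every element at deep enough levels. -/
def SelfSimilarGroup.IsNucleus {X G : Type*} [Group G]
    (A : SelfSimilarGroup X G) (N : Finset G) : Prop :=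
  (1 : G) ∈ N ∧ (∀ g ∈ N, ∀ v : List X, A.sec g v ∈ N) ∧
    ∀ g : G, ∃ n₀ : ℕ, ∀ v : List X, n₀ ≤ v.length → A.sec g v ∈ N

/-- Lemma 4.1. For every `p ∈ (0,∞)` and all `n₁ n₂ : ℕ`, the contraction
coefficients of a finitely generated self-similar group satisfy
`η_{p,n₁+n₂} ≤ η_{p,n₁} · η_{p,n₂}` in `[0,∞]`. -/
theorem eta_submultiplicative {X G : Type*} [Fintype X] [Nonempty X] [Group G]
    (A : SelfSimilarGroup X G) (S : Finset G)
    (hgen : Subgroup.closure (S : Set G) = ⊤)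
    (hsym : ∀ s ∈ S, s⁻¹ ∈ S)
    (p : ℝ) (hp : 0 < p) (n₁ n₂ : ℕ) :
    eta A S p (n₁ + n₂) ≤ eta A S p n₁ * eta A S p n₂ := by
  classical
  rcases Filter.eq_or_neBot (Filter.comap (wordLength S) Filter.atTop : Filter G) with hbot | hne
  · simp only [eta, hbot, Filter.limsup_bot]
    exact bot_le
  have hp' : p ≠ 0 := ne_of_gt hp
  have hp0 : (0:ℝ) ≤ p := hp.le
  have hip : (0:ℝ) < 1/p := by positivity
  have hip0 : (0:ℝ) ≤ 1/p := hip.le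
  set lf : Filter G := Filter.comap (wordLength S) Filter.atTop with hlf
  set ℓ : G → ℝ≥0∞ := fun g => (wordLength S g : ℝ≥0∞) with hℓ
  set T : ℕ → G → ℝ≥0∞ :=
    fun n g => ∑ f : Fin n → X, (wordLength S (A.sec g (List.ofFn f)) : ℝ≥0∞) ^ p with hTdef
  set F : ℕ → G → ℝ≥0∞ := fun n g => (T n g) ^ (1/p) / ℓ g with hFdef
  have heta : ∀ n, eta A S p n = Filter.limsup (F n) lf := fun n => rfl
  have hev : ∀ m : ℕ, ∀ᶠ g in lf, m ≤ wordLength S g := fun m =>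
    Filter.eventually_comap.mpr (Filter.eventually_atTop.mpr ⟨m, fun k hk g hg => hg ▸ hk⟩)
  have hℓtop : ∀ g : G, ℓ g ≠ ∞ := fun g => ENNReal.natCast_ne_top _
  have hℓ0 : ∀ g : G, 1 ≤ wordLength S g → ℓ g ≠ 0 := by
    intro g hg
    simp only [hℓ, Nat.cast_ne_zero]
    omega
  have hterm : ∀ (n : ℕ) (g : G) (f : Fin n → X),
      (wordLength S (A.sec g (List.ofFn f)) : ℝ≥0∞) ≤ (secBound A S n : ℝ≥0∞) * ℓ g := by
    intro n g f
    have h := sec_wordLength_le A S hgen hsym g (List.ofFn f) List.length_ofFn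
    simp only [hℓ]
    exact_mod_cast h
  have hTle : ∀ (n : ℕ) (g : G),
      T n g ≤ (Fintype.card (Fin n → X) : ℝ≥0∞) * ((secBound A S n : ℝ≥0∞) * ℓ g) ^ p := by
    intro n g
    calc T n g ≤ ∑ _f : Fin n → X, ((secBound A S n : ℝ≥0∞) * ℓ g) ^ p :=
          Finset.sum_le_sum fun f _ => ENNReal.rpow_le_rpow (hterm n g f) hp0
      _ = _ := by rw [Finset.sum_const, Finset.card_univ, nsmul_eq_mul]
  have hfin : ∀ n : ℕ, eta A S p n ≠ ∞ := by
    intro n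
    have hb : eta A S p n ≤
        (Fintype.card (Fin n → X) : ℝ≥0∞) ^ (1/p) * (secBound A S n : ℝ≥0∞) := by
      rw [heta]
      refine Filter.limsup_le_of_le (by isBoundedDefault) ?_
      filter_upwards [hev 1] with g hg
      have h1 : (T n g) ^ (1/p) ≤
          ((Fintype.card (Fin n → X) : ℝ≥0∞) ^ (1/p) * (secBound A S n : ℝ≥0∞)) * ℓ g := by
        calc (T n g) ^ (1/p)
            ≤ ((Fintype.card (Fin n → X) : ℝ≥0∞) *
                ((secBound A S n : ℝ≥0∞) * ℓ g) ^ p) ^ (1/p) :=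
              ENNReal.rpow_le_rpow (hTle n g) hip0
          _ = (Fintype.card (Fin n → X) : ℝ≥0∞) ^ (1/p) * ((secBound A S n : ℝ≥0∞) * ℓ g) := by
              rw [ENNReal.mul_rpow_of_nonneg _ _ hip0, one_div, ENNReal.rpow_rpow_inv hp']
          _ = _ := by ring
      exact ENNReal.div_le_of_le_mul h1
    refine ne_top_of_le_ne_top ?_ hb
    exact ENNReal.mul_ne_top (ENNReal.rpow_ne_top_of_nonneg hip0 (ENNReal.natCast_ne_top _))
      (ENNReal.natCast_ne_top _)
  set a := eta A S p n₁ with hadef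
  set b := eta A S p n₂ with hbdef
  have hsplit : ∀ g : G, T (n₁+n₂) g = ∑ f₁ : Fin n₁ → X, T n₂ (A.sec g (List.ofFn f₁)) := by
    intro g
    calc T (n₁+n₂) g
        = ∑ q : (Fin n₁ → X) × (Fin n₂ → X),
            (wordLength S (A.sec g (List.ofFn (Fin.append q.1 q.2))) : ℝ≥0∞) ^ p :=
          (Fintype.sum_equiv (Fin.appendEquiv n₁ n₂) _ _ fun q => rfl).symm
      _ = ∑ f₁ : Fin n₁ → X, T n₂ (A.sec g (List.ofFn f₁)) := by
          rw [Fintype.sum_prod_type]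
          refine Finset.sum_congr rfl fun f₁ _ => ?_
          simp only [hTdef]
          refine Finset.sum_congr rfl fun f₂ _ => ?_
          rw [List.ofFn_fin_append, A.sec_append]
  have key : ∀ b' : ℝ≥0∞, b < b' → b' ≠ ∞ → eta A S p (n₁+n₂) ≤ b' * a := by
    intro b' hb' hb'top
    have h1 : ∀ᶠ g in lf, F n₂ g < b' := by
      refine Filter.eventually_lt_of_limsup_lt ?_
      rw [← heta]
      exact hb'
    obtain ⟨m, hm1, hm⟩ : ∃ m : ℕ, 1 ≤ m ∧
        ∀ h : G, m ≤ wordLength S h → T n₂ h ≤ b' ^ p * (ℓ h) ^ p := by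
      have h2 := h1.and (hev 1)
      rw [hlf, Filter.eventually_comap, Filter.eventually_atTop] at h2
      obtain ⟨m₀, hm₀⟩ := h2
      refine ⟨max m₀ 1, le_max_right _ _, fun h hh => ?_⟩
      obtain ⟨hFh, hgh⟩ := hm₀ (wordLength S h) (le_trans (le_max_left _ _) hh) h rfl
      have hle : (T n₂ h) ^ (1/p) ≤ b' * ℓ h :=
        (ENNReal.div_le_iff (hℓ0 h hgh) (hℓtop h)).mp hFh.le
      calc T n₂ h = ((T n₂ h) ^ (1/p)) ^ p := by rw [one_div, ENNReal.rpow_inv_rpow hp']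
        _ ≤ (b' * ℓ h) ^ p := ENNReal.rpow_le_rpow hle hp0
        _ = b' ^ p * (ℓ h) ^ p := ENNReal.mul_rpow_of_nonneg _ _ hp0
    set C : ℝ≥0∞ :=
      (Fintype.card (Fin n₂ → X) : ℝ≥0∞) * ((secBound A S n₂ : ℝ≥0∞) * m) ^ p with hC
    have hCtop : C ≠ ∞ := by
      refine ENNReal.mul_ne_top (ENNReal.natCast_ne_top _) ?_
      exact ENNReal.rpow_ne_top_of_nonneg hp0
        (ENNReal.mul_ne_top (ENNReal.natCast_ne_top _) (ENNReal.natCast_ne_top _))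
    have h4 : ∀ h : G, T n₂ h ≤ b' ^ p * (ℓ h) ^ p + C := by
      intro h
      rcases le_or_gt m (wordLength S h) with hcase | hcase
      · exact le_add_right (hm h hcase)
      · have hle : T n₂ h ≤ C := by
          refine (hTle n₂ h).trans ?_
          rw [hC]
          gcongr
          simp only [hℓ]
          exact_mod_cast hcase.le
        exact hle.trans le_add_self
    set D : ℝ≥0∞ := (Fintype.card (Fin n₁ → X) : ℝ≥0∞) * C with hD
    have hDtop : D ≠ ∞ := ENNReal.mul_ne_top (ENNReal.natCast_ne_top _) hCtop
    have h5 : ∀ g : G, T (n₁+n₂) g ≤ b' ^ p * T n₁ g + D := by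
      intro g
      rw [hsplit g]
      calc ∑ f₁ : Fin n₁ → X, T n₂ (A.sec g (List.ofFn f₁))
          ≤ ∑ f₁ : Fin n₁ → X,
              (b' ^ p * ((wordLength S (A.sec g (List.ofFn f₁)) : ℝ≥0∞)) ^ p + C) :=
            Finset.sum_le_sum fun f₁ _ => h4 _
        _ = b' ^ p * T n₁ g + D := by
            rw [Finset.sum_add_distrib, ← Finset.mul_sum, Finset.sum_const, Finset.card_univ,
              nsmul_eq_mul, hTdef, hD]
    have h6 : ∀ᶠ g in lf, F (n₁+n₂) g ≤ (b' ^ p * (F n₁ g) ^ p + D / (ℓ g) ^ p) ^ (1/p) := by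
      refine Filter.Eventually.of_forall fun g => ?_
      have e1 : F (n₁+n₂) g = (T (n₁+n₂) g / (ℓ g) ^ p) ^ (1/p) := by
        rw [hFdef]
        rw [ENNReal.div_rpow_of_nonneg _ _ hip0, one_div, ENNReal.rpow_rpow_inv hp']
      have e2 : (F n₁ g) ^ p = T n₁ g / (ℓ g) ^ p := by
        rw [hFdef]
        rw [ENNReal.div_rpow_of_nonneg _ _ hp0, one_div, ENNReal.rpow_inv_rpow hp']
      rw [e1, e2]
      refine ENNReal.rpow_le_rpow ?_ hip0
      calc T (n₁+n₂) g / (ℓ g) ^ p ≤ (b' ^ p * T n₁ g + D) / (ℓ g) ^ p := by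
            gcongr
            exact h5 g
        _ = b' ^ p * (T n₁ g / (ℓ g) ^ p) + D / (ℓ g) ^ p := by
            rw [ENNReal.add_div, mul_div_assoc]
    have h7 : eta A S p (n₁+n₂) ≤
        (Filter.limsup (fun g => b' ^ p * (F n₁ g) ^ p + D / (ℓ g) ^ p) lf) ^ (1/p) := by
      rw [heta]
      refine le_trans (Filter.limsup_le_limsup h6) ?_
      have hiso := OrderIso.limsup_apply (f := lf)
        (u := fun g => b' ^ p * (F n₁ g) ^ p + D / (ℓ g) ^ p) (ENNReal.orderIsoRpow (1/p) hip)
      simp only [ENNReal.orderIsoRpow_apply] at hiso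
      exact le_of_eq hiso.symm
    have hV : Filter.limsup (fun g => D / (ℓ g) ^ p) lf = 0 := by
      refine le_antisymm ?_ zero_le
      refine ENNReal.le_of_forall_pos_le_add fun ε hε _ => ?_
      rw [zero_add]
      have hDε : (D / (ε : ℝ≥0∞)) ^ (1/p) ≠ ∞ :=
        ENNReal.rpow_ne_top_of_nonneg hip0
          (ENNReal.div_lt_top hDtop (by exact_mod_cast hε.ne')).ne
      obtain ⟨k, hk⟩ := ENNReal.exists_nat_gt hDε
      have hkp : D ≤ (ε : ℝ≥0∞) * (k : ℝ≥0∞) ^ p := by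
        have h1 : D / (ε : ℝ≥0∞) ≤ (k : ℝ≥0∞) ^ p := by
          calc D / (ε : ℝ≥0∞) = ((D / (ε : ℝ≥0∞)) ^ (1/p)) ^ p := by
                rw [one_div, ENNReal.rpow_inv_rpow hp']
            _ ≤ (k : ℝ≥0∞) ^ p := ENNReal.rpow_le_rpow hk.le hp0
        calc D = (ε : ℝ≥0∞) * (D / (ε : ℝ≥0∞)) :=
              (ENNReal.mul_div_cancel (by exact_mod_cast hε.ne') ENNReal.coe_ne_top).symm
          _ ≤ (ε : ℝ≥0∞) * (k : ℝ≥0∞) ^ p := by gcongr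
      refine Filter.limsup_le_of_le (by isBoundedDefault) ?_
      filter_upwards [hev k] with g hg
      calc D / (ℓ g) ^ p ≤ ((ε : ℝ≥0∞) * (k : ℝ≥0∞) ^ p) / (k : ℝ≥0∞) ^ p :=
            ENNReal.div_le_div hkp (ENNReal.rpow_le_rpow (by simp only [hℓ]; exact_mod_cast hg) hp0)
        _ ≤ (ε : ℝ≥0∞) := ENNReal.div_le_of_le_mul' (le_of_eq (mul_comm _ _))
    have h8 : Filter.limsup (fun g => b' ^ p * (F n₁ g) ^ p + D / (ℓ g) ^ p) lf ≤
        b' ^ p * a ^ p := by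
      refine le_trans (ennreal_limsup_add_le lf _ _) ?_
      rw [hV, add_zero]
      have hconst : Filter.limsup (fun g => b' ^ p * (F n₁ g) ^ p) lf =
          b' ^ p * Filter.limsup (fun g => (F n₁ g) ^ p) lf :=
        ENNReal.limsup_const_mul_of_ne_top (ENNReal.rpow_ne_top_of_nonneg hp0 hb'top)
      rw [hconst]
      gcongr
      have hiso := OrderIso.limsup_apply (f := lf) (u := F n₁) (ENNReal.orderIsoRpow p hp)
      simp only [ENNReal.orderIsoRpow_apply] at hiso
      rw [← hiso, ← heta, ← hadef]
    calc eta A S p (n₁+n₂) ≤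
        (Filter.limsup (fun g => b' ^ p * (F n₁ g) ^ p + D / (ℓ g) ^ p) lf) ^ (1/p) := h7
      _ ≤ (b' ^ p * a ^ p) ^ (1/p) := ENNReal.rpow_le_rpow h8 hip0
      _ = b' * a := by
          rw [ENNReal.mul_rpow_of_nonneg _ _ hip0, one_div, ENNReal.rpow_rpow_inv hp',
            ENNReal.rpow_rpow_inv hp']
  refine ENNReal.le_of_forall_pos_le_add fun ε hε _ => ?_
  rcases eq_or_ne a 0 with ha0 | ha0
  · have h := key (b + 1) (ENNReal.lt_add_right (hfin n₂) one_ne_zero)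
      (ENNReal.add_ne_top.mpr ⟨hfin n₂, ENNReal.one_ne_top⟩)
    rw [ha0, mul_zero] at h
    exact h.trans zero_le
  · have hεa0 : (ε : ℝ≥0∞) / a ≠ 0 :=
      (ENNReal.div_pos (by exact_mod_cast hε.ne') (hfin n₁)).ne'
    have hεatop : (ε : ℝ≥0∞) / a ≠ ∞ := (ENNReal.div_lt_top ENNReal.coe_ne_top ha0).ne
    have h := key (b + (ε : ℝ≥0∞) / a) (ENNReal.lt_add_right (hfin n₂) hεa0)
      (ENNReal.add_ne_top.mpr ⟨hfin n₂, hεatop⟩)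
    refine h.trans ?_
    rw [add_mul, ENNReal.div_mul_cancel ha0 (hfin n₁), mul_comm b a]
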